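/- arXiv:1811.09351 — 2 statements merged into one kernel-verified Lean document; each statement's English description precedes it below -/
import Mathlib

section
/- Under the same hypotheses, with K = K_x ⊗ M_y + M_x ⊗ K_y, one has Ã⁻¹K = (P_x ⊗ P_y)(E_x D_x ⊗ E_y + E_x ⊗ E_y D_y)(P_x⁻¹ ⊗ P_y⁻¹). -/
open Matrix Kronecker

theorem split_inverse_stiffness (n m : ℕ)
    (Mx Kx Px Dx : Matrix (Fin n) (Fin n) ℝ) (dx : Fin n → ℝ)
    (My Ky Py Dy : Matrix (Fin m) (Fin m) ℝ) (dy : Fin m → ℝ) (η : ℝ)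
    (hDx : Dx = Matrix.diagonal dx) (hDy : Dy = Matrix.diagonal dy)
    (hMx : IsUnit Mx.det) (hMy : IsUnit My.det)
    (hPx : IsUnit Px.det) (hPy : IsUnit Py.det)
    (hEx : IsUnit (1 + η • Dx).det) (hEy : IsUnit (1 + η • Dy).det)
    (hKx : Kx = Mx * Px * Dx * Px⁻¹) (hKy : Ky = My * Py * Dy * Py⁻¹) :
    ((Mx + η • Kx) ⊗ₖ (My + η • Ky))⁻¹ * (Kx ⊗ₖ My + Mx ⊗ₖ Ky) =
      (Px ⊗ₖ Py) * (((1 + η • Dx)⁻¹ * Dx) ⊗ₖ (1 + η • Dy)⁻¹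
        + (1 + η • Dx)⁻¹ ⊗ₖ ((1 + η • Dy)⁻¹ * Dy)) * (Px⁻¹ ⊗ₖ Py⁻¹) := by
  have hPx1 : Px * Px⁻¹ = 1 := Matrix.mul_nonsing_inv _ hPx
  have hPy1 : Py * Py⁻¹ = 1 := Matrix.mul_nonsing_inv _ hPy
  have hMPxi : (Mx * Px)⁻¹ * (Mx * Px) = 1 :=
    Matrix.nonsing_inv_mul _ (by rw [Matrix.det_mul]; exact hMx.mul hPx)
  have hMPyi : (My * Py)⁻¹ * (My * Py) = 1 :=
    Matrix.nonsing_inv_mul _ (by rw [Matrix.det_mul]; exact hMy.mul hPy)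
  have hA : Mx + η • Kx = Mx * Px * (1 + η • Dx) * Px⁻¹ := by
    subst hKx
    rw [Matrix.mul_add, Matrix.add_mul, mul_one, Matrix.mul_assoc Mx Px Px⁻¹, hPx1,
      mul_one, Matrix.mul_smul, Matrix.smul_mul]
  have hB : My + η • Ky = My * Py * (1 + η • Dy) * Py⁻¹ := by
    subst hKy
    rw [Matrix.mul_add, Matrix.add_mul, mul_one, Matrix.mul_assoc My Py Py⁻¹, hPy1,
      mul_one, Matrix.mul_smul, Matrix.smul_mul]
  have hAt : (Mx + η • Kx) ⊗ₖ (My + η • Ky) =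
      ((Mx * Px * (1 + η • Dx)) ⊗ₖ (My * Py * (1 + η • Dy))) * (Px⁻¹ ⊗ₖ Py⁻¹) := by
    rw [hA, hB, ← Matrix.mul_kronecker_mul]
  have hinv : ((Mx + η • Kx) ⊗ₖ (My + η • Ky))⁻¹ =
      (Px ⊗ₖ Py) * (((1 + η • Dx)⁻¹ * (Mx * Px)⁻¹) ⊗ₖ ((1 + η • Dy)⁻¹ * (My * Py)⁻¹)) := by
    rw [hAt, Matrix.mul_inv_rev, Matrix.inv_kronecker, Matrix.inv_kronecker,
      Matrix.nonsing_inv_nonsing_inv _ hPx, Matrix.nonsing_inv_nonsing_inv _ hPy,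
      Matrix.mul_inv_rev (Mx * Px), Matrix.mul_inv_rev (My * Py),
      ← Matrix.mul_kronecker_mul]
  have hMy' : My = (My * Py) * Py⁻¹ := by rw [Matrix.mul_assoc, hPy1, mul_one]
  have hMx' : Mx = (Mx * Px) * Px⁻¹ := by rw [Matrix.mul_assoc, hPx1, mul_one]
  have hKxMy : Kx ⊗ₖ My = ((Mx * Px * Dx) ⊗ₖ (My * Py)) * (Px⁻¹ ⊗ₖ Py⁻¹) := by
    conv_lhs => rw [hKx, hMy']
    rw [← Matrix.mul_kronecker_mul]
  have hMxKy : Mx ⊗ₖ Ky = ((Mx * Px) ⊗ₖ (My * Py * Dy)) * (Px⁻¹ ⊗ₖ Py⁻¹) := by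
    conv_lhs => rw [hKy, hMx']
    rw [← Matrix.mul_kronecker_mul]
  have c1 : (1 + η • Dx)⁻¹ * (Mx * Px)⁻¹ * (Mx * Px * Dx) = (1 + η • Dx)⁻¹ * Dx := by
    rw [Matrix.mul_assoc, ← Matrix.mul_assoc (Mx * Px)⁻¹, hMPxi, one_mul]
  have c2 : (1 + η • Dy)⁻¹ * (My * Py)⁻¹ * (My * Py) = (1 + η • Dy)⁻¹ := by
    rw [Matrix.mul_assoc, hMPyi, mul_one]
  have c3 : (1 + η • Dx)⁻¹ * (Mx * Px)⁻¹ * (Mx * Px) = (1 + η • Dx)⁻¹ := by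
    rw [Matrix.mul_assoc, hMPxi, mul_one]
  have c4 : (1 + η • Dy)⁻¹ * (My * Py)⁻¹ * (My * Py * Dy) = (1 + η • Dy)⁻¹ * Dy := by
    rw [Matrix.mul_assoc, ← Matrix.mul_assoc (My * Py)⁻¹, hMPyi, one_mul]
  rw [hinv, hKxMy, hMxKy, Matrix.mul_add,
    ← Matrix.mul_assoc _ _ (Px⁻¹ ⊗ₖ Py⁻¹), ← Matrix.mul_assoc _ _ (Px⁻¹ ⊗ₖ Py⁻¹),
    Matrix.mul_assoc (Px ⊗ₖ Py) _ ((Mx * Px * Dx) ⊗ₖ (My * Py)),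
    Matrix.mul_assoc (Px ⊗ₖ Py) _ ((Mx * Px) ⊗ₖ (My * Py * Dy)),
    ← Matrix.mul_kronecker_mul ((1 + η • Dx)⁻¹ * (Mx * Px)⁻¹) (Mx * Px * Dx)
      ((1 + η • Dy)⁻¹ * (My * Py)⁻¹) (My * Py),
    ← Matrix.mul_kronecker_mul ((1 + η • Dx)⁻¹ * (Mx * Px)⁻¹) (Mx * Px)
      ((1 + η • Dy)⁻¹ * (My * Py)⁻¹) (My * Py * Dy), c1, c2, c3, c4,
    Matrix.mul_add, Matrix.add_mul]
end

section
/- Let μ ≥ 0 and let λ̃ be a root of the quadratic (1 − γμ/(α_m + γα_f μ) − λ̃)(1 − (1 + α_f μ)/(α_m + γα_f μ) − λ̃) + (μ/(α_m + γα_f μ))(1 − (γ + γα_f μ)/(α_m + γα_f μ)) = 0. If α_m ≥ α_f ≥ 1/2 and γ = 1/2 + α_m − α_f, then |λ̃| ≤ 1. -/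
/-- Jury/Schur–Cohn criterion: a complex root of a real quadratic
`z^2 - S z + P` with `P ≤ 1`, `1 - S + P ≥ 0`, `1 + S + P ≥ 0`
lies in the closed unit disk. -/
lemma jury_aux (S P : ℝ) (z : ℂ)
    (hz : z ^ 2 - (S : ℂ) * z + (P : ℂ) = 0)
    (hP : P ≤ 1) (h1 : 0 ≤ 1 - S + P) (h2 : 0 ≤ 1 + S + P) :
    ‖z‖ ≤ 1 := by
  obtain ⟨x, y⟩ := z
  have hre : x ^ 2 - y ^ 2 - S * x + P = 0 := by
    have := congrArg Complex.re hz
    simpa [pow_two, Complex.mul_re, Complex.mul_im] using this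
  have him : 2 * x * y - S * y = 0 := by
    have := congrArg Complex.im hz
    simp [pow_two, Complex.mul_re, Complex.mul_im] at this
    linarith [this]
  have hkey : x ^ 2 + y ^ 2 ≤ 1 := by
    by_cases hy0 : y = 0
    · subst hy0
      have hw : x * (S - x) = P := by linear_combination -hre
      have hfac1 : (1 - x) * (1 - (S - x)) = 1 - S + P := by linear_combination hw
      have hfac2 : (1 + x) * (1 + (S - x)) = 1 + S + P := by linear_combination hw
      rcases lt_or_ge 1 x with hx1 | hx1
      · exfalso
        have h5 : 1 ≤ S - x := by nlinarith [hfac1, h1]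
        nlinarith [hw, hP]
      · rcases lt_or_ge x (-1) with hx2 | hx2
        · exfalso
          have h5 : S - x ≤ -1 := by nlinarith [hfac2, h2]
          nlinarith [hw, hP]
        · nlinarith
    · have hS : S = 2 * x := by
        have : y * (2 * x - S) = 0 := by linarith [him]
        rcases mul_eq_zero.1 this with h | h
        · exact absurd h hy0
        · linarith
      nlinarith [hre, hP, hS]
  have habs : ‖(⟨x, y⟩ : ℂ)‖ ^ 2 = x ^ 2 + y ^ 2 := by
    rw [Complex.sq_norm, Complex.normSq_apply]
    show x * x + y * y = x ^ 2 + y ^ 2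
    ring
  nlinarith [norm_nonneg (⟨x, y⟩ : ℂ), habs, hkey]

theorem genalpha_unconditional_stability (μ αm αf γ : ℝ)
    (hμ : 0 ≤ μ) (hmf : αm ≥ αf) (hf : αf ≥ 1 / 2) (hγ : γ = 1 / 2 + αm - αf)
    (lamt : ℂ)
    (hroot : ((1 : ℂ) - (γ * μ / (αm + γ * αf * μ) : ℝ) - lamt) *
          ((1 : ℂ) - ((1 + αf * μ) / (αm + γ * αf * μ) : ℝ) - lamt)
        + ((μ / (αm + γ * αf * μ) : ℝ) : ℂ) *
          ((1 : ℂ) - ((γ + γ * αf * μ) / (αm + γ * αf * μ) : ℝ)) = 0) :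
    ‖lamt‖ ≤ 1 := by
  have hγ2 : (1:ℝ)/2 ≤ γ := by rw [hγ]; linarith
  have hD : 0 < αm + γ * αf * μ := by
    have h2 : (0:ℝ) < αm := by linarith
    have h3 : 0 ≤ γ * αf * μ := by
      apply mul_nonneg (mul_nonneg (by linarith) (by linarith)) hμ
    linarith
  have hDne : αm + γ * αf * μ ≠ 0 := ne_of_gt hD
  apply jury_aux
    ((1 - γ * μ / (αm + γ * αf * μ)) + (1 - (1 + αf * μ) / (αm + γ * αf * μ)))
    ((1 - γ * μ / (αm + γ * αf * μ)) * (1 - (1 + αf * μ) / (αm + γ * αf * μ))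
      + (μ / (αm + γ * αf * μ)) * (1 - (γ + γ * αf * μ) / (αm + γ * αf * μ)))
    lamt
  · push_cast at hroot ⊢
    linear_combination hroot
  · -- P ≤ 1, i.e. 1 - P = (1 + μ(αm - 1/2))/D ≥ 0
    have key : 1 - ((1 - γ * μ / (αm + γ * αf * μ)) * (1 - (1 + αf * μ) / (αm + γ * αf * μ))
        + (μ / (αm + γ * αf * μ)) * (1 - (γ + γ * αf * μ) / (αm + γ * αf * μ)))
        = (1 + μ * (αm - 1/2)) / (αm + γ * αf * μ) := by
      rw [hγ] at hDne ⊢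
      field_simp [hDne]
      ring
    have hnum : 0 ≤ 1 + μ * (αm - 1/2) := by
      have : 0 ≤ μ * (αm - 1/2) := mul_nonneg hμ (by linarith)
      linarith
    have : 0 ≤ (1 + μ * (αm - 1/2)) / (αm + γ * αf * μ) := div_nonneg hnum hD.le
    linarith [key, this]
  · -- 1 - S + P = μ/D ≥ 0
    have key : 1 - ((1 - γ * μ / (αm + γ * αf * μ)) + (1 - (1 + αf * μ) / (αm + γ * αf * μ)))
        + ((1 - γ * μ / (αm + γ * αf * μ)) * (1 - (1 + αf * μ) / (αm + γ * αf * μ))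
          + (μ / (αm + γ * αf * μ)) * (1 - (γ + γ * αf * μ) / (αm + γ * αf * μ)))
        = μ / (αm + γ * αf * μ) := by
      field_simp [hDne]
      ring
    have : 0 ≤ μ / (αm + γ * αf * μ) := div_nonneg hμ hD.le
    linarith [key, this]
  · -- 1 + S + P = 4(s + t + s t μ)/D ≥ 0
    have key : 1 + ((1 - γ * μ / (αm + γ * αf * μ)) + (1 - (1 + αf * μ) / (αm + γ * αf * μ)))
        + ((1 - γ * μ / (αm + γ * αf * μ)) * (1 - (1 + αf * μ) / (αm + γ * αf * μ))
          + (μ / (αm + γ * αf * μ)) * (1 - (γ + γ * αf * μ) / (αm + γ * αf * μ)))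
        = 4 * ((αm - αf) + (αf - 1/2) + (αm - αf) * (αf - 1/2) * μ) / (αm + γ * αf * μ) := by
      have h2D : (0:ℝ) < αm * 2 + αm * αf * μ * 2 + (αf * μ - αf ^ 2 * μ * 2) := by
        rw [hγ] at hD; nlinarith [hD]
      rw [hγ] at hDne ⊢
      field_simp [hDne, h2D.ne']
      linear_combination (-4:ℝ) * mul_inv_cancel₀ h2D.ne'
    have hnum : 0 ≤ 4 * ((αm - αf) + (αf - 1/2) + (αm - αf) * (αf - 1/2) * μ) := by
      have : 0 ≤ (αm - αf) * (αf - 1/2) * μ :=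
        mul_nonneg (mul_nonneg (by linarith) (by linarith)) hμ
      linarith
    have : 0 ≤ 4 * ((αm - αf) + (αf - 1/2) + (αm - αf) * (αf - 1/2) * μ) / (αm + γ * αf * μ) :=
      div_nonneg hnum hD.le
    linarith [key, this]
end
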